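/- Let G be a finite group and N a subgroup of G. Then for every x ∈ G, o_N(x) divides the index [G : N]. -/

import Mathlib

/-- `nOrd S x` is the smallest positive integer `k` such that `x ^ k ∈ S`. -/
noncomputable def nOrd {G : Type*} [Group G] (S : Set G) (x : G) : ℕ :=
  sInf {k : ℕ | 0 < k ∧ x ^ k ∈ S}

/-- `gOrd S x = gcd { nOrd S (g⁻¹ * x * g) : g ∈ G }`, the generalized order of `x`
with respect to `S`. -/
noncomputable def gOrd {G : Type*} [Group G] [Fintype G] (S : Set G) (x : G) : ℕ :=
  Finset.univ.gcd fun g : G => nOrd S (g⁻¹ * x * g)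

open scoped Classical in
/-- `oSub N x = gcd { gOrd N (x * m) : m ∈ N }`. -/
noncomputable def oSub {G : Type*} [Group G] [Fintype G] (N : Subgroup G) (x : G) : ℕ :=
  Finset.univ.gcd fun m : N => gOrd (N : Set G) (x * (m : G))

open MulAction Subgroup Function

/-- The minimal period of `x` acting on a coset `q` of `N` equals
`nOrd N (q.out⁻¹ * x * q.out)`. -/
lemma nOrd_eq_minimalPeriod {G : Type*} [Group G] [Fintype G] (N : Subgroup G) (x : G)
    (q : G ⧸ N) : nOrd (N : Set G) (q.out⁻¹ * x * q.out) = Function.minimalPeriod (x • ·) q := by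
  have key : ∀ k : ℕ, (q.out⁻¹ * x * q.out) ^ k ∈ N ↔ x ^ k • q = q := by
    intro k
    have h1 : (q.out⁻¹ * x * q.out) ^ k = q.out⁻¹ * x ^ k * q.out := by
      rw [show q.out⁻¹ * x * q.out = q.out⁻¹ * x * q.out⁻¹⁻¹ by rw [inv_inv],
        conj_pow, inv_inv]
    have h2 : x ^ k • q = QuotientGroup.mk (x ^ k * q.out) := by
      conv_lhs => rw [← q.out_eq]
      rfl
    rw [h1, h2]
    conv_rhs => rw [← q.out_eq]
    rw [QuotientGroup.eq]
    constructor
    · intro h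
      have := N.inv_mem h
      simpa [mul_assoc, mul_inv_rev] using this
    · intro h
      have := N.inv_mem h
      simpa [mul_assoc, mul_inv_rev] using this
  have hpos : 0 < Function.minimalPeriod (x • ·) q := by
    have : NeZero (Function.minimalPeriod (x • ·) q) := minimalPeriod_pos x q
    exact Nat.pos_of_ne_zero this.out
  have hfix : x ^ Function.minimalPeriod (x • ·) q • q = q := by
    have := Function.isPeriodicPt_minimalPeriod (x • ·) q
    exact (MulAction.isPeriodicPt_smul_iff).mp this
  apply le_antisymm
  · exact Nat.sInf_le ⟨hpos, (key _).mpr hfix⟩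
  · have hne : {k : ℕ | 0 < k ∧ (q.out⁻¹ * x * q.out) ^ k ∈ N}.Nonempty :=
      ⟨_, hpos, (key _).mpr hfix⟩
    obtain ⟨h1, h2⟩ := Nat.sInf_mem hne
    exact (MulAction.isPeriodicPt_smul_iff.mpr ((key _).mp h2)).minimalPeriod_le h1

theorem stmt14 {G : Type*} [Group G] [Fintype G] (N : Subgroup G) (x : G) :
    oSub N x ∣ N.index := by
  classical
  have h1 : oSub N x ∣ gOrd (N : Set G) x := by
    have := Finset.gcd_dvd (f := fun m : N => gOrd (N : Set G) (x * (m : G)))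
      (Finset.mem_univ (1 : N))
    simpa [oSub] using this
  refine h1.trans ?_
  -- It suffices to show gOrd divides the index
  have hcard : N.index =
      ∑ q : Quotient (orbitRel (zpowers x) (G ⧸ N)),
        Function.minimalPeriod (x • ·) q.out := by
    rw [index_eq_card, Nat.card_eq_fintype_card,
      Fintype.card_congr (selfEquivSigmaOrbits (zpowers x) (G ⧸ N)), Fintype.card_sigma]
    congr 1
    funext q
    rw [minimalPeriod_eq_card]
    exact Fintype.card_congr' rfl
  rw [hcard]
  refine Finset.dvd_sum fun q _ => ?_
  rw [← nOrd_eq_minimalPeriod]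
  exact Finset.gcd_dvd (Finset.mem_univ _)
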